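/- Let M[P,Q] be a lattice path matroid with bounding paths P and Q from (0,0) to (m,r). Then M[P,Q] is a connected matroid if and only if the paths P and Q intersect only at the points (0,0) and (m,r). -/

import Mathlib

/-- `B` is a transversal of the interval system `(N_j = [lo j, hi j])_{j : Fin r}`. -/
def IsTransLH (r : ℕ) (lo hi : Fin r → ℕ) (B : Finset ℕ) : Prop :=
  ∃ f : Fin r ↪ ℕ, (∀ j : Fin r, lo j ≤ f j ∧ f j ≤ hi j) ∧ Finset.univ.map f = B

/-- `M` is a direct sum of two nonempty matroids: for some set `X` with both `X`
and `M.E \ X` nonempty, the bases of `M` are exactly the unions of a base of the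
restriction `M ↾ X` and a base of `M ↾ (M.E \ X)`. -/
def IsDirectSumDecomposable (M : Matroid ℕ) : Prop :=
  ∃ X : Set ℕ, X ⊆ M.E ∧ X.Nonempty ∧ (M.E \ X).Nonempty ∧
    ∀ B : Set ℕ, M.IsBase B ↔
      ∃ B₁ B₂ : Set ℕ, (M.restrict X).IsBase B₁ ∧ (M.restrict (M.E \ X)).IsBase B₂ ∧ B = B₁ ∪ B₂



open Finset

lemma ordEmb_le_iff {S : Finset ℕ} {r : ℕ} (h : S.card = r) (i : Fin r) (e : ℕ) :
    S.orderEmbOfFin h i ≤ e ↔ (i : ℕ) < (S.filter (· ≤ e)).card := by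
  constructor
  · intro hie
    have hsub : (Finset.Iic i).image (S.orderEmbOfFin h) ⊆ S.filter (· ≤ e) := by
      intro x hx
      simp only [Finset.mem_image, Finset.mem_Iic] at hx
      obtain ⟨j, hj, rfl⟩ := hx
      exact Finset.mem_filter.2 ⟨S.orderEmbOfFin_mem h j,
        le_trans ((S.orderEmbOfFin h).monotone hj) hie⟩
    have := Finset.card_le_card hsub
    rwa [Finset.card_image_of_injective _ (S.orderEmbOfFin h).injective, Fin.card_Iic] at this
  · intro hlt
    by_contra hie
    push_neg at hie
    have hsub : S.filter (· ≤ e) ⊆ (Finset.Iio i).image (S.orderEmbOfFin h) := by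
      intro x hx
      obtain ⟨hxS, hxe⟩ := Finset.mem_filter.1 hx
      have : x ∈ Set.range (S.orderEmbOfFin h) := by
        rw [Finset.range_orderEmbOfFin]; exact hxS
      obtain ⟨j, rfl⟩ := this
      refine Finset.mem_image.2 ⟨j, Finset.mem_Iio.2 ?_, rfl⟩
      by_contra hji
      push_neg at hji
      exact absurd (le_trans ((S.orderEmbOfFin h).monotone hji) hxe) (not_le.2 hie)
    have := Finset.card_le_card hsub
    rw [Finset.card_image_of_injective _ (S.orderEmbOfFin h).injective, Fin.card_Iio] at this
    omega

lemma card_filter_lt_fin {r k : ℕ} (hk : k ≤ r) :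
    ((Finset.univ : Finset (Fin r)).filter (fun j : Fin r => (j : ℕ) < k)).card = k := by
  classical
  have himg : ((Finset.univ : Finset (Fin r)).filter (fun j : Fin r => (j : ℕ) < k)).image Fin.val
      = Finset.range k := by
    ext a
    simp only [Finset.mem_image, Finset.mem_filter, Finset.mem_univ, true_and, Finset.mem_range]
    constructor
    · rintro ⟨j, hj, rfl⟩; exact hj
    · intro ha; exact ⟨⟨a, lt_of_lt_of_le ha hk⟩, ha, rfl⟩
  have := congrArg Finset.card himg
  rwa [Finset.card_image_of_injective _ Fin.val_injective, Finset.card_range] at this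

lemma restrict_base_iff_aux {M : Matroid ℕ} {Z : Set ℕ} (hZE : Z ⊆ M.E)
    (hfin : ∀ B, M.IsBase B → B.Finite)
    (hconst : ∀ B B', M.IsBase B → M.IsBase B' → (B ∩ Z).encard = (B' ∩ Z).encard) :
    ∀ B₁, (M.restrict Z).IsBase B₁ ↔ ∃ B, M.IsBase B ∧ B₁ = B ∩ Z := by
  intro B₁
  rw [Matroid.isBase_restrict_iff hZE, Matroid.isBasis_iff hZE]
  constructor
  · rintro ⟨hind, hsub, hmax⟩
    obtain ⟨B, hB, hB₁B⟩ := Matroid.indep_iff.1 hind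
    refine ⟨B, hB, hmax (B ∩ Z) ?_ (Set.subset_inter hB₁B hsub) Set.inter_subset_right⟩
    exact Matroid.indep_iff.2 ⟨B, hB, Set.inter_subset_left⟩
  · rintro ⟨B, hB, rfl⟩
    refine ⟨Matroid.indep_iff.2 ⟨B, hB, Set.inter_subset_left⟩, Set.inter_subset_right, ?_⟩
    intro J hJ hBZJ hJZ
    obtain ⟨B', hB', hJB'⟩ := Matroid.indep_iff.1 hJ
    have hJB'Z : J ⊆ B' ∩ Z := Set.subset_inter hJB' hJZ
    refine (Set.Finite.eq_of_subset_of_encard_le' ((hfin B' hB').subset hJB') hBZJ ?_)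
    calc J.encard ≤ (B' ∩ Z).encard := Set.encard_mono hJB'Z
      _ = (B ∩ Z).encard := hconst B' B hB' hB

lemma encard_coe_inter {r : ℕ} (f : Fin r ↪ ℕ) (Z : Set ℕ) [DecidablePred (· ∈ Z)] :
    ((↑(Finset.univ.map f) : Set ℕ) ∩ Z).encard
      = ((Finset.univ.filter (fun i : Fin r => f i ∈ Z)).card : ℕ∞) := by
  classical
  have h1 : (↑(Finset.univ.map f) : Set ℕ) ∩ Z = ↑((Finset.univ.map f).filter (· ∈ Z)) := by
    ext x
    simp only [Set.mem_inter_iff, Finset.coe_filter, Set.mem_setOf_eq, Finset.mem_coe]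
  rw [h1, Set.encard_coe_eq_coe_finsetCard, Finset.filter_map, Finset.card_map]
  rfl

/-- **Connectedness of lattice path matroids.**  Let `M = M[P,Q]` be the lattice path
matroid with bounding paths `P` (lower) and `Q` (upper) from `(0,0)` to `(m,r)`
(encoded by North-step position sets in `[1, m+r]`, prefix counts of `P` at most
those of `Q`), whose bases are the `r`-element transversals of the associated
interval system.  Then `M` is connected (not a direct sum of two nonempty matroids)
if and only if `P` and `Q` intersect only at `(0,0)` and `(m,r)`, i.e. for every
`0 < p < m+r` the prefix North-count of `P` is strictly less than that of `Q`. -/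

theorem stmt7 (m r : ℕ) (P Q : Finset ℕ) (M : Matroid ℕ)
    (hPs : P ⊆ Finset.Icc 1 (m + r)) (hQs : Q ⊆ Finset.Icc 1 (m + r))
    (hP : P.card = r) (hQ : Q.card = r)
    (hPQ : ∀ p ≤ m + r, (P.filter (· ≤ p)).card ≤ (Q.filter (· ≤ p)).card)
    (hE : M.E = ↑(Finset.Icc 1 (m + r)))
    (hBase : ∀ B : Finset ℕ, M.IsBase ↑B ↔
      IsTransLH r (fun i => (Q.orderIsoOfFin hQ i : ℕ)) (fun i => (P.orderIsoOfFin hP i : ℕ)) B) :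
    ¬ IsDirectSumDecomposable M ↔
      ∀ p, 0 < p → p < m + r → (P.filter (· ≤ p)).card < (Q.filter (· ≤ p)).card := by
  classical
  have hBase' : ∀ B : Finset ℕ, M.IsBase ↑B ↔ ∃ f : Fin r ↪ ℕ,
      (∀ j : Fin r, Q.orderEmbOfFin hQ j ≤ f j ∧ f j ≤ P.orderEmbOfFin hP j) ∧
      Finset.univ.map f = B := by
    intro B
    rw [hBase B]
    unfold IsTransLH
    simp_rw [Finset.coe_orderIsoOfFin_apply]
  have hq1 : ∀ j : Fin r, 1 ≤ Q.orderEmbOfFin hQ j := fun j =>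
    (Finset.mem_Icc.1 (hQs (Q.orderEmbOfFin_mem hQ j))).1
  have hqm : ∀ j : Fin r, Q.orderEmbOfFin hQ j ≤ m + r := fun j =>
    (Finset.mem_Icc.1 (hQs (Q.orderEmbOfFin_mem hQ j))).2
  have hp1 : ∀ j : Fin r, 1 ≤ P.orderEmbOfFin hP j := fun j =>
    (Finset.mem_Icc.1 (hPs (P.orderEmbOfFin_mem hP j))).1
  have hpm : ∀ j : Fin r, P.orderEmbOfFin hP j ≤ m + r := fun j =>
    (Finset.mem_Icc.1 (hPs (P.orderEmbOfFin_mem hP j))).2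
  have hQP : ∀ j : Fin r, Q.orderEmbOfFin hQ j ≤ P.orderEmbOfFin hP j := by
    intro j
    have h1 : (j : ℕ) < (P.filter (· ≤ P.orderEmbOfFin hP j)).card :=
      (ordEmb_le_iff hP j _).1 le_rfl
    exact (ordEmb_le_iff hQ j _).2 (lt_of_lt_of_le h1 (hPQ _ (hpm j)))
  constructor
  · -- connected → strict
    intro hconn p hp0 hpmr
    by_contra hle
    push_neg at hle
    have hk : (P.filter (· ≤ p)).card = (Q.filter (· ≤ p)).card :=
      le_antisymm (hPQ p hpmr.le) hle
    refine hconn ?_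
    set k := (P.filter (· ≤ p)).card with hkdef
    have hkr : k ≤ r := by rw [hkdef, ← hP]; exact Finset.card_filter_le _ _
    have hFP : ∀ i : Fin r, P.orderEmbOfFin hP i ≤ p ↔ (i : ℕ) < k := by
      intro i; rw [ordEmb_le_iff hP i p, ← hkdef]
    have hFQ : ∀ i : Fin r, Q.orderEmbOfFin hQ i ≤ p ↔ (i : ℕ) < k := by
      intro i; rw [ordEmb_le_iff hQ i p, ← hk]
    set X : Set ℕ := (↑(Finset.Icc 1 p) : Set ℕ) with hXdef
    have hmemXiff : ∀ x : ℕ, x ∈ X ↔ 1 ≤ x ∧ x ≤ p := by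
      intro x; rw [hXdef, Finset.mem_coe, Finset.mem_Icc]
    have hmemEiff : ∀ x : ℕ, x ∈ M.E ↔ 1 ≤ x ∧ x ≤ m + r := by
      intro x; rw [hE, Finset.mem_coe, Finset.mem_Icc]
    have hXE : X ⊆ M.E := by
      intro x hx
      rw [hmemXiff] at hx
      rw [hmemEiff]
      omega
    have hEfin : M.E.Finite := by rw [hE]; exact (Finset.Icc 1 (m + r)).finite_toSet
    have hBfin : ∀ B : Set ℕ, M.IsBase B → B.Finite :=
      fun B hB => hEfin.subset hB.subset_ground
    have baseRep : ∀ B : Set ℕ, M.IsBase B → ∃ f : Fin r ↪ ℕ,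
        (∀ i : Fin r, Q.orderEmbOfFin hQ i ≤ f i ∧ f i ≤ P.orderEmbOfFin hP i) ∧
        B = ↑(Finset.univ.map f) := by
      intro B hB
      have hfin := hBfin B hB
      have hcoe : (↑hfin.toFinset : Set ℕ) = B := Set.Finite.coe_toFinset hfin
      rw [← hcoe] at hB
      obtain ⟨f, hf, hmap⟩ := (hBase' _).1 hB
      exact ⟨f, hf, by rw [← hcoe, ← hmap]⟩
    -- membership of transversal values
    have hmemX : ∀ f : Fin r → ℕ,
        (∀ i : Fin r, Q.orderEmbOfFin hQ i ≤ f i ∧ f i ≤ P.orderEmbOfFin hP i) →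
        ∀ i : Fin r, (f i ∈ X ↔ (i : ℕ) < k) := by
      intro f hf i
      rw [hmemXiff]
      constructor
      · rintro ⟨-, h2⟩
        exact (hFQ i).1 (le_trans (hf i).1 h2)
      · intro hik
        exact ⟨le_trans (hq1 i) (hf i).1, le_trans (hf i).2 ((hFP i).2 hik)⟩
    have hmemY : ∀ f : Fin r → ℕ,
        (∀ i : Fin r, Q.orderEmbOfFin hQ i ≤ f i ∧ f i ≤ P.orderEmbOfFin hP i) →
        ∀ i : Fin r, (f i ∈ M.E \ X ↔ ¬ ((i : ℕ) < k)) := by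
      intro f hf i
      have hfE : f i ∈ M.E := by
        rw [hmemEiff]
        exact ⟨le_trans (hq1 i) (hf i).1, le_trans (hf i).2 (hpm i)⟩
      rw [Set.mem_diff, hmemX f hf i]
      tauto
    -- encard of intersections with X and its complement, for any base
    have hcount : ∀ B : Set ℕ, M.IsBase B → (B ∩ X).encard = (k : ℕ∞) := by
      intro B hB
      obtain ⟨f, hf, rfl⟩ := baseRep B hB
      rw [encard_coe_inter]
      norm_cast
      rw [Finset.filter_congr (fun i _ => hmemX f hf i)]
      exact card_filter_lt_fin hkr
    have hcountY : ∀ B : Set ℕ, M.IsBase B → (B ∩ (M.E \ X)).encard = ((r - k : ℕ) : ℕ∞) := by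
      intro B hB
      obtain ⟨f, hf, rfl⟩ := baseRep B hB
      rw [encard_coe_inter]
      norm_cast
      rw [Finset.filter_congr (fun i _ => hmemY f hf i)]
      have hsplit := Finset.card_filter_add_card_filter_not
        (s := (Finset.univ : Finset (Fin r))) (p := fun i : Fin r => (i : ℕ) < k)
      rw [card_filter_lt_fin hkr, Finset.card_univ, Fintype.card_fin] at hsplit
      omega
    have hLX : ∀ B₁ : Set ℕ, (M.restrict X).IsBase B₁ ↔ ∃ B, M.IsBase B ∧ B₁ = B ∩ X :=
      restrict_base_iff_aux hXE hBfin
        (fun B B' hB hB' => by rw [hcount B hB, hcount B' hB'])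
    have hLY : ∀ B₂ : Set ℕ, (M.restrict (M.E \ X)).IsBase B₂ ↔
        ∃ B, M.IsBase B ∧ B₂ = B ∩ (M.E \ X) :=
      restrict_base_iff_aux Set.diff_subset hBfin
        (fun B B' hB hB' => by rw [hcountY B hB, hcountY B' hB'])
    refine ⟨X, hXE, ⟨1, by rw [hmemXiff]; omega⟩,
      ⟨p + 1, by rw [Set.mem_diff, hmemXiff, hmemEiff]; omega⟩, ?_⟩
    intro B
    constructor
    · intro hB
      refine ⟨B ∩ X, B ∩ (M.E \ X), (hLX _).2 ⟨B, hB, rfl⟩, (hLY _).2 ⟨B, hB, rfl⟩, ?_⟩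
      rw [← Set.inter_union_distrib_left, Set.union_diff_cancel hXE,
        Set.inter_eq_left.2 hB.subset_ground]
    · rintro ⟨B₁, B₂, h1, h2, rfl⟩
      obtain ⟨C, hC, rfl⟩ := (hLX _).1 h1
      obtain ⟨D, hD, rfl⟩ := (hLY _).1 h2
      obtain ⟨f, hfb, rfl⟩ := baseRep C hC
      obtain ⟨g, hgb, rfl⟩ := baseRep D hD
      set h : Fin r → ℕ := fun i => if (i : ℕ) < k then f i else g i with hhdef
      have hinj : Function.Injective h := by
        intro i i' heq
        simp only [hhdef] at heq
        by_cases hi : (i : ℕ) < k <;> by_cases hi' : (i' : ℕ) < k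
        · rw [if_pos hi, if_pos hi'] at heq; exact f.injective heq
        · rw [if_pos hi, if_neg hi'] at heq
          exfalso
          have h1' : f i ∈ X := (hmemX f hfb i).2 hi
          have h2' : g i' ∉ X := fun hmem => hi' ((hmemX g hgb i').1 hmem)
          rw [heq] at h1'; exact h2' h1'
        · rw [if_neg hi, if_pos hi'] at heq
          exfalso
          have h1' : f i' ∈ X := (hmemX f hfb i').2 hi'
          have h2' : g i ∉ X := fun hmem => hi ((hmemX g hgb i).1 hmem)
          rw [← heq] at h1'; exact h2' h1'
        · rw [if_neg hi, if_neg hi'] at heq; exact g.injective heq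
      have hbounds : ∀ i : Fin r,
          Q.orderEmbOfFin hQ i ≤ h i ∧ h i ≤ P.orderEmbOfFin hP i := by
        intro i
        simp only [hhdef]
        by_cases hi : (i : ℕ) < k
        · rw [if_pos hi]; exact hfb i
        · rw [if_neg hi]; exact hgb i
      have hseteq : (↑(Finset.univ.map f) : Set ℕ) ∩ X ∪
          (↑(Finset.univ.map g) : Set ℕ) ∩ (M.E \ X)
          = ↑(Finset.univ.map ⟨h, hinj⟩) := by
        ext x
        simp only [Set.mem_union, Set.mem_inter_iff, Finset.coe_map, Set.mem_image,
          Finset.coe_univ, Set.image_univ, Set.mem_range, Function.Embedding.coeFn_mk]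
        constructor
        · rintro (⟨⟨i, rfl⟩, hxX⟩ | ⟨⟨i, rfl⟩, hxY⟩)
          · refine ⟨i, ?_⟩
            have hik : (i : ℕ) < k := (hmemX f hfb i).1 hxX
            simp only [hhdef, if_pos hik]
          · refine ⟨i, ?_⟩
            have hik : ¬ (i : ℕ) < k := (hmemY g hgb i).1 hxY
            simp only [hhdef, if_neg hik]
        · rintro ⟨i, rfl⟩
          by_cases hik : (i : ℕ) < k
          · left
            have : h i = f i := by simp only [hhdef, if_pos hik]
            rw [this]
            exact ⟨⟨i, rfl⟩, (hmemX f hfb i).2 hik⟩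
          · right
            have : h i = g i := by simp only [hhdef, if_neg hik]
            rw [this]
            exact ⟨⟨i, rfl⟩, (hmemY g hgb i).2 hik⟩
      rw [hseteq]
      exact (hBase' _).2 ⟨⟨h, hinj⟩, hbounds, rfl⟩
  · -- strict → connected
    intro hstrict hdec
    obtain ⟨X, hXE, ⟨a, haX⟩, ⟨b, hbEX⟩, hiff⟩ := hdec
    have haE : a ∈ Finset.Icc 1 (m + r) := by
      have := hXE haX; rwa [hE] at this
    have hbE : b ∈ Finset.Icc 1 (m + r) := by
      have := hbEX.1; rwa [hE] at this
    have hbX : b ∉ X := hbEX.2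
    rw [Finset.mem_Icc] at haE hbE
    -- find a boundary element e
    have hbdry : ∃ e, 1 ≤ e ∧ e + 1 ≤ m + r ∧
        ((e ∈ X ∧ e + 1 ∉ X) ∨ (e ∉ X ∧ e + 1 ∈ X)) := by
      by_contra hno
      push_neg at hno
      have hiffstep : ∀ e, 1 ≤ e → e + 1 ≤ m + r → (e ∈ X ↔ e + 1 ∈ X) := by
        intro e h1 h2
        have h3 := hno e h1 h2
        tauto
      have key : ∀ x, 1 ≤ x → x ≤ m + r → (x ∈ X ↔ 1 ∈ X) := by
        intro x
        induction x with
        | zero => omega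
        | succ n ih =>
          intro h1 h2
          rcases Nat.lt_or_ge 1 (n + 1) with h | h
          · have hn1 : 1 ≤ n := by omega
            rw [← hiffstep n hn1 h2]
            exact ih hn1 (by omega)
          · have : n + 1 = 1 := by omega
            rw [this]
      have ha' := (key a haE.1 haE.2).1 haX
      have hb' := (key b hbE.1 hbE.2).2 ha'
      exact hbX hb'
    obtain ⟨e, he1, hem, hcase⟩ := hbdry
    have hs : (P.filter (· ≤ e)).card < (Q.filter (· ≤ e)).card :=
      hstrict e (by omega) (by omega)
    have hjr : (P.filter (· ≤ e)).card < r := by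
      have : (Q.filter (· ≤ e)).card ≤ r := by
        rw [← hQ]; exact Finset.card_filter_le _ _
      omega
    have hex : ∃ j : Fin r, Q.orderEmbOfFin hQ j ≤ e ∧ e + 1 ≤ P.orderEmbOfFin hP j := by
      refine ⟨⟨(P.filter (· ≤ e)).card, hjr⟩, (ordEmb_le_iff hQ _ e).2 hs, ?_⟩
      by_contra h
      push_neg at h
      have h2 := (ordEmb_le_iff hP ⟨(P.filter (· ≤ e)).card, hjr⟩ e).1 (by omega)
      simp only [Fin.val_mk] at h2
      omega
    obtain ⟨j, hQj, hPj⟩ := hex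
    set fc : ℕ → Fin r → ℕ := fun c i =>
      if (i : ℕ) < (j : ℕ) then Q.orderEmbOfFin hQ i
      else if (i : ℕ) = (j : ℕ) then c else P.orderEmbOfFin hP i with hfc
    have hqs := (Q.orderEmbOfFin hQ).strictMono
    have hps := (P.orderEmbOfFin hP).strictMono
    have hmono : ∀ c, Q.orderEmbOfFin hQ j ≤ c → c ≤ P.orderEmbOfFin hP j →
        StrictMono (fc c) := by
      intro c hc1 hc2 i i' hii'
      have hv : (i : ℕ) < (i' : ℕ) := hii'
      simp only [hfc]
      rcases lt_trichotomy (i : ℕ) (j : ℕ) with hi | hi | hi <;>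
        rcases lt_trichotomy (i' : ℕ) (j : ℕ) with hi' | hi' | hi'
      · rw [if_pos hi, if_pos hi']; exact hqs hii'
      · rw [if_pos hi, if_neg (by omega), if_pos hi']
        exact lt_of_lt_of_le (hqs (show i < j from Fin.lt_def.2 (by omega))) hc1
      · rw [if_pos hi, if_neg (by omega), if_neg (by omega)]
        calc Q.orderEmbOfFin hQ i < Q.orderEmbOfFin hQ j :=
              hqs (Fin.lt_def.2 (by omega))
          _ ≤ c := hc1
          _ ≤ P.orderEmbOfFin hP j := hc2
          _ < P.orderEmbOfFin hP i' := hps (Fin.lt_def.2 (by omega))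
      · omega
      · omega
      · rw [if_neg (by omega), if_pos hi, if_neg (by omega), if_neg (by omega)]
        exact lt_of_le_of_lt hc2 (hps (Fin.lt_def.2 (by omega)))
      · omega
      · omega
      · rw [if_neg (by omega), if_neg (by omega), if_neg (by omega), if_neg (by omega)]
        exact hps hii'
    have hbounds : ∀ c, Q.orderEmbOfFin hQ j ≤ c → c ≤ P.orderEmbOfFin hP j →
        ∀ i : Fin r, Q.orderEmbOfFin hQ i ≤ fc c i ∧ fc c i ≤ P.orderEmbOfFin hP i := by
      intro c hc1 hc2 i
      simp only [hfc]
      rcases lt_trichotomy (i : ℕ) (j : ℕ) with hi | hi | hi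
      · rw [if_pos hi]; exact ⟨le_rfl, hQP i⟩
      · have hij : i = j := Fin.ext hi
        rw [if_neg (by omega), if_pos hi, hij]
        exact ⟨hc1, hc2⟩
      · rw [if_neg (by omega), if_neg (by omega)]
        exact ⟨hQP i, le_rfl⟩
    have hce : Q.orderEmbOfFin hQ j ≤ e ∧ e ≤ P.orderEmbOfFin hP j := ⟨hQj, by omega⟩
    have hce1 : Q.orderEmbOfFin hQ j ≤ e + 1 ∧ e + 1 ≤ P.orderEmbOfFin hP j :=
      ⟨by omega, hPj⟩
    set femb : Fin r ↪ ℕ := ⟨fc e, (hmono e hce.1 hce.2).injective⟩ with hfemb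
    set femb1 : Fin r ↪ ℕ := ⟨fc (e + 1), (hmono (e + 1) hce1.1 hce1.2).injective⟩ with hfemb1
    have hBe : M.IsBase ↑(Finset.univ.map femb) :=
      (hBase' _).2 ⟨femb, hbounds e hce.1 hce.2, rfl⟩
    have hBe1 : M.IsBase ↑(Finset.univ.map femb1) :=
      (hBase' _).2 ⟨femb1, hbounds (e + 1) hce1.1 hce1.2, rfl⟩
    obtain ⟨B₁, B₂, hB₁, hB₂, hBeq⟩ := (hiff _).1 hBe
    obtain ⟨B₁', B₂', hB₁', hB₂', hBeq'⟩ := (hiff _).1 hBe1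
    have hB₁X : B₁ ⊆ X := by
      have := hB₁.subset_ground; rwa [Matroid.restrict_ground_eq] at this
    have hB₁X' : B₁' ⊆ X := by
      have := hB₁'.subset_ground; rwa [Matroid.restrict_ground_eq] at this
    have hB₂X : B₂ ⊆ M.E \ X := by
      have := hB₂.subset_ground; rwa [Matroid.restrict_ground_eq] at this
    have hB₂X' : B₂' ⊆ M.E \ X := by
      have := hB₂'.subset_ground; rwa [Matroid.restrict_ground_eq] at this
    have hint : (↑(Finset.univ.map femb) : Set ℕ) ∩ X = B₁ := by
      rw [hBeq, Set.union_inter_distrib_right,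
        Set.inter_eq_self_of_subset_left hB₁X,
        (Set.disjoint_sdiff_left.mono_left hB₂X).inter_eq, Set.union_empty]
    have hint' : (↑(Finset.univ.map femb1) : Set ℕ) ∩ X = B₁' := by
      rw [hBeq', Set.union_inter_distrib_right,
        Set.inter_eq_self_of_subset_left hB₁X',
        (Set.disjoint_sdiff_left.mono_left hB₂X').inter_eq, Set.union_empty]
    have hcard : ((↑(Finset.univ.map femb) : Set ℕ) ∩ X).encard
        = ((↑(Finset.univ.map femb1) : Set ℕ) ∩ X).encard := by
      rw [hint, hint']
      exact hB₁.encard_eq_encard_of_isBase hB₁'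
    rw [encard_coe_inter, encard_coe_inter] at hcard
    have hcardN : (Finset.univ.filter (fun i : Fin r => femb i ∈ X)).card
        = (Finset.univ.filter (fun i : Fin r => femb1 i ∈ X)).card := by
      exact_mod_cast hcard
    have hfcne : ∀ i : Fin r, i ≠ j → fc e i = fc (e + 1) i := by
      intro i hij
      have hv : (i : ℕ) ≠ (j : ℕ) := fun h => hij (Fin.ext h)
      simp only [hfc]
      by_cases h1 : (i : ℕ) < (j : ℕ)
      · rw [if_pos h1, if_pos h1]
      · rw [if_neg h1, if_neg h1, if_neg hv, if_neg hv]
    have hfej : fc e j = e := by simp [hfc]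
    have hfe1j : fc (e + 1) j = e + 1 := by simp [hfc]
    have herase : (Finset.univ.filter (fun i : Fin r => femb i ∈ X)).erase j
        = (Finset.univ.filter (fun i : Fin r => femb1 i ∈ X)).erase j := by
      ext i
      simp only [Finset.mem_erase, Finset.mem_filter, Finset.mem_univ, true_and]
      constructor
      · rintro ⟨hij, hmem⟩
        refine ⟨hij, ?_⟩
        have := hfcne i hij
        simpa [hfemb, hfemb1, ← this] using hmem
      · rintro ⟨hij, hmem⟩
        refine ⟨hij, ?_⟩
        have := hfcne i hij
        simpa [hfemb, hfemb1, this] using hmem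
    rcases hcase with ⟨heX, heX'⟩ | ⟨heX, heX'⟩
    · have hjmem : j ∈ Finset.univ.filter (fun i : Fin r => femb i ∈ X) := by
        simp [hfemb, hfej, heX]
      have hjmem' : j ∉ Finset.univ.filter (fun i : Fin r => femb1 i ∈ X) := by
        simp [hfemb1, hfe1j, heX']
      have h1 : ((Finset.univ.filter (fun i : Fin r => femb i ∈ X)).erase j).card + 1
          = (Finset.univ.filter (fun i : Fin r => femb i ∈ X)).card :=
        Finset.card_erase_add_one hjmem
      rw [herase, Finset.erase_eq_of_notMem hjmem'] at h1
      omega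
    · have hjmem : j ∉ Finset.univ.filter (fun i : Fin r => femb i ∈ X) := by
        simp [hfemb, hfej, heX]
      have hjmem' : j ∈ Finset.univ.filter (fun i : Fin r => femb1 i ∈ X) := by
        simp [hfemb1, hfe1j, heX']
      have h1 : ((Finset.univ.filter (fun i : Fin r => femb1 i ∈ X)).erase j).card + 1
          = (Finset.univ.filter (fun i : Fin r => femb1 i ∈ X)).card :=
        Finset.card_erase_add_one hjmem'
      rw [← herase, Finset.erase_eq_of_notMem hjmem] at h1
      omega
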